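/- arXiv:2506.03361 — 7 statements merged into one kernel-verified Lean document; each statement's English description precedes it below -/
import Mathlib

section
/- For every integer i ≥ 1 and every finite alphabet A with |A| ≥ 2, the maximum cardinality of a code C ⊆ (A³)ⁱ that is unambiguous for the Scenario-A.2 i-shot Diamond channel, taken over all choices of per-round node functions (f₁ʲ : A → A, f₂ʲ : A² → A for j = 1,…,i), equals (|A| − 1)ⁱ. Equivalently, the i-shot capacity of the Diamond Network when the adversary may change the attacked edge each round is log_{|A|}(|A| − 1), the same as its one-shot capacity. -/
/-- A code `C` is unambiguous for the channel `Ω` if distinct codewords have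
disjoint fan-out sets. -/
def Unambiguous {X Y : Type*} (Ω : X → Set Y) (C : Finset X) : Prop :=
  ∀ x ∈ C, ∀ y ∈ C, x ≠ y → Ω x ∩ Ω y = ∅

/-- The `i`-shot Diamond Network channel in Scenario A.2: in each round the
adversary may corrupt at most one of the three source edges, possibly a
different edge in different rounds.  Per-round node functions are
`f₁ʲ : A → A` (node `V₁`) and `f₂ʲ : A² → A` (node `V₂`). -/
def diamondA2Channel {A : Type*} [DecidableEq A] (i : ℕ)
    (f₁ : Fin i → A → A) (f₂ : Fin i → A → A → A)
    (x : Fin i → Fin 3 → A) : Set (Fin i → A × A) :=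
  { z | ∃ y : Fin i → Fin 3 → A,
      (∀ j : Fin i, hammingDist (y j) (x j) ≤ 1) ∧
      (∀ j : Fin i, z j = (f₁ j (y j 0), f₂ j (y j 1) (y j 2))) }

/-- The one-round fan-out set. -/
def roundFan {A : Type*} [DecidableEq A] (f₁ : A → A) (f₂ : A → A → A)
    (u : Fin 3 → A) : Set (A × A) :=
  { w | ∃ yy : Fin 3 → A, hammingDist yy u ≤ 1 ∧ w = (f₁ (yy 0), f₂ (yy 1) (yy 2)) }

lemma ham_update {A : Type*} [DecidableEq A] (u : Fin 3 → A) (k : Fin 3) (a : A) :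
    hammingDist (Function.update u k a) u ≤ 1 := by
  have hsub : (Finset.univ.filter fun i => Function.update u k a i ≠ u i) ⊆ {k} := by
    intro i hi
    simp only [Finset.mem_filter] at hi
    by_contra h
    simp only [Finset.mem_singleton] at h
    exact hi.2 (Function.update_of_ne h a u)
  calc hammingDist (Function.update u k a) u
      = (Finset.univ.filter fun i => Function.update u k a i ≠ u i).card := rfl
    _ ≤ ({k} : Finset (Fin 3)).card := Finset.card_le_card hsub
    _ = 1 := Finset.card_singleton k

lemma ham_pair {A : Type*} [DecidableEq A] (y x : Fin 3 → A)
    (h : hammingDist y x ≤ 1) (i j : Fin 3) (hij : i ≠ j) : y i = x i ∨ y j = x j := by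
  by_contra h'
  push_neg at h'
  have hsub : ({i, j} : Finset (Fin 3)) ⊆ Finset.univ.filter fun k => y k ≠ x k := by
    intro k hk
    simp only [Finset.mem_insert, Finset.mem_singleton] at hk
    rcases hk with rfl | rfl <;> simp [h'.1, h'.2]
  have h2 : 2 ≤ hammingDist y x := by
    calc 2 = ({i, j} : Finset (Fin 3)).card := (Finset.card_pair hij).symm
      _ ≤ _ := Finset.card_le_card hsub
  omega

lemma mem_diamond_iff {A : Type*} [DecidableEq A] {i : ℕ}
    (f₁ : Fin i → A → A) (f₂ : Fin i → A → A → A)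
    (x : Fin i → Fin 3 → A) (z : Fin i → A × A) :
    z ∈ diamondA2Channel i f₁ f₂ x ↔ ∀ j, z j ∈ roundFan (f₁ j) (f₂ j) (x j) := by
  constructor
  · rintro ⟨y, h1, h2⟩ j
    exact ⟨y j, h1 j, h2 j⟩
  · intro h
    choose y h1 h2 using h
    exact ⟨y, h1, h2⟩

lemma confus {A : Type*} [DecidableEq A] (f₁ : A → A) (f₂ : A → A → A) (u v : Fin 3 → A)
    (h : (∃ c, f₂ (v 1) c = f₂ (u 1) (u 2)) ∨ (∃ r, f₂ r (v 2) = f₂ (u 1) (u 2))) :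
    ∃ w, w ∈ roundFan f₁ f₂ u ∧ w ∈ roundFan f₁ f₂ v := by
  refine ⟨(f₁ (v 0), f₂ (u 1) (u 2)), ⟨Function.update u 0 (v 0), ham_update u 0 (v 0), ?_⟩, ?_⟩
  · rw [Function.update_self, Function.update_of_ne (by decide), Function.update_of_ne (by decide)]
  · rcases h with ⟨c, hc⟩ | ⟨r, hr⟩
    · exact ⟨Function.update v 2 c, ham_update v 2 c, by
        rw [Function.update_self, Function.update_of_ne (by decide),
          Function.update_of_ne (by decide), hc]⟩
    · exact ⟨Function.update v 1 r, ham_update v 1 r, by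
        rw [Function.update_self, Function.update_of_ne (by decide),
          Function.update_of_ne (by decide), hr]⟩

/-- The (q-1)-coloring of blocks such that equally colored blocks are confusable. -/
lemma exists_coloring (A : Type*) [DecidableEq A] (a₀ a₁ : A) (h01 : a₁ ≠ a₀)
    (M : A → A → A) :
    ∃ ψ : (Fin 3 → A) → A, (∀ u, ψ u ≠ a₀) ∧
      ∀ u v : Fin 3 → A, ψ u = ψ v →
        ((∃ c, M (v 1) c = M (u 1) (u 2)) ∨ (∃ r, M r (v 2) = M (u 1) (u 2))) ∨
        ((∃ c, M (u 1) c = M (v 1) (v 2)) ∨ (∃ r, M r (u 2) = M (v 1) (v 2))) := by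
  classical
  refine ⟨fun u =>
    if M (u 1) (u 2) ≠ a₀ then M (u 1) (u 2)
    else if h : ∃ t, t ≠ a₀ ∧ ((∃ c, M (u 1) c = t) ∨ (∃ r, M r (u 2) = t)) then h.choose
    else a₁, ?_, ?_⟩
  · intro u
    by_cases hu : M (u 1) (u 2) ≠ a₀
    · simp only [if_pos hu]
      exact hu
    · simp only [if_neg hu]
      by_cases h : ∃ t, t ≠ a₀ ∧ ((∃ c, M (u 1) c = t) ∨ (∃ r, M r (u 2) = t))
      · simpa [dif_pos h] using h.choose_spec.1
      · simpa [dif_neg h] using h01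
  · intro u v hψ
    beta_reduce at hψ
    by_cases hu : M (u 1) (u 2) = a₀ <;> by_cases hv : M (v 1) (v 2) = a₀
    · exact Or.inl (Or.inl ⟨v 2, hv.trans hu.symm⟩)
    · -- u is an a₀-cell, v not
      rw [if_neg (not_not_intro hu), if_pos hv] at hψ
      by_cases h : ∃ t, t ≠ a₀ ∧ ((∃ c, M (u 1) c = t) ∨ (∃ r, M r (u 2) = t))
      · rw [dif_pos h] at hψ
        exact Or.inr (hψ ▸ h.choose_spec.2)
      · -- fallback: the whole row of u is a₀
        have hrow : ∀ c, M (u 1) c = a₀ := by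
          intro c
          by_contra hc
          exact h ⟨M (u 1) c, hc, Or.inl ⟨c, rfl⟩⟩
        exact Or.inl (Or.inr ⟨u 1, (hrow (v 2)).trans hu.symm⟩)
    · -- v is an a₀-cell, u not
      rw [if_pos hu, if_neg (not_not_intro hv)] at hψ
      by_cases h : ∃ t, t ≠ a₀ ∧ ((∃ c, M (v 1) c = t) ∨ (∃ r, M r (v 2) = t))
      · rw [dif_pos h] at hψ
        refine Or.inl ?_
        rw [hψ]
        exact h.choose_spec.2
      · have hrow : ∀ c, M (v 1) c = a₀ := by
          intro c
          by_contra hc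
          exact h ⟨M (v 1) c, hc, Or.inl ⟨c, rfl⟩⟩
        exact Or.inr (Or.inr ⟨v 1, (hrow (u 2)).trans hv.symm⟩)
    · rw [if_pos hu, if_pos hv] at hψ
      exact Or.inl (Or.inl ⟨v 2, hψ.symm⟩)

/-- Output structure of the achievability scheme's one-round fan. -/
lemma round_out {A : Type*} [DecidableEq A] (a₀ a : A) (z : A × A)
    (hz : z ∈ roundFan (id : A → A) (fun b c => if b = c then b else a₀)
      (fun _ : Fin 3 => a)) :
    z.2 = a ∨ (z.1 = a ∧ z.2 = a₀) := by
  obtain ⟨yy, hd, rfl⟩ := hz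
  by_cases h1 : yy 1 = a <;> by_cases h2 : yy 2 = a
  · left
    simp [h1, h2]
  · have h0 : yy 0 = a := by
      rcases ham_pair yy (fun _ => a) hd 0 2 (by decide) with h | h
      · exact h
      · exact absurd h h2
    right
    have : yy 1 ≠ yy 2 := fun he => h2 (he ▸ h1)
    exact ⟨h0, by simp [this]⟩
  · have h0 : yy 0 = a := by
      rcases ham_pair yy (fun _ => a) hd 0 1 (by decide) with h | h
      · exact h
      · exact absurd h h1
    right
    have : yy 1 ≠ yy 2 := fun he => h1 (he.symm ▸ h2)
    exact ⟨h0, by simp [this]⟩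
  · rcases ham_pair yy (fun _ => a) hd 1 2 (by decide) with h | h
    · exact absurd h h1
    · exact absurd h h2

/-- Scenario A.2 multishot capacity of the Diamond Network: the maximum
cardinality of an unambiguous code, over all choices of per-round node
functions, is `(|A| - 1)^i`. -/
theorem diamond_A2_multishot_capacity
    (A : Type*) [Fintype A] [DecidableEq A] (hA : 2 ≤ Fintype.card A)
    (i : ℕ) (hi : 1 ≤ i) :
    IsGreatest { n : ℕ |
        ∃ (f₁ : Fin i → A → A) (f₂ : Fin i → A → A → A)
          (C : Finset (Fin i → Fin 3 → A)),
          Unambiguous (diamondA2Channel i f₁ f₂) C ∧ C.card = n }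
      ((Fintype.card A - 1) ^ i) := by
  classical
  obtain ⟨a₁, a₀, h01⟩ := Fintype.exists_pair_of_one_lt_card hA
  have hcard : Fintype.card {a : A // a ≠ a₀} = Fintype.card A - 1 := by
    simp [Fintype.card_subtype_compl, Fintype.card_subtype_eq]
  constructor
  · -- achievability
    set f₂ : Fin i → A → A → A := fun _ b c => if b = c then b else a₀ with hf₂
    have hembinj : Function.Injective
        (fun g : Fin i → {a : A // a ≠ a₀} => fun j => fun _ : Fin 3 => (g j : A)) := by
      intro g h he
      funext j
      exact Subtype.ext (congrFun (congrFun he j) 0)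
    refine ⟨fun _ => id, f₂,
      Finset.univ.image (fun g : Fin i → {a : A // a ≠ a₀} => fun j => fun _ : Fin 3 => (g j : A)),
      ?_, ?_⟩
    · intro x hx y hy hxy
      obtain ⟨g, -, rfl⟩ := Finset.mem_image.mp hx
      obtain ⟨h, -, rfl⟩ := Finset.mem_image.mp hy
      have hgh : g ≠ h := fun he => hxy (by rw [he])
      obtain ⟨j₀, hj₀⟩ := Function.ne_iff.mp hgh
      ext z
      simp only [Set.mem_inter_iff, Set.mem_empty_iff_false, iff_false, not_and]
      intro hzx hzy
      have hx' := (mem_diamond_iff _ _ _ _).mp hzx j₀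
      have hy' := (mem_diamond_iff _ _ _ _).mp hzy j₀
      have hrx : z j₀ ∈ roundFan (id : A → A) (fun b c => if b = c then b else a₀)
          (fun _ : Fin 3 => (g j₀ : A)) := hx'
      have hry : z j₀ ∈ roundFan (id : A → A) (fun b c => if b = c then b else a₀)
          (fun _ : Fin 3 => (h j₀ : A)) := hy'
      have hg0 := (g j₀).2
      have hh0 := (h j₀).2
      have hgh0 : (g j₀ : A) ≠ (h j₀ : A) := fun he => hj₀ (Subtype.ext he)
      rcases round_out a₀ _ _ hrx with h1 | ⟨h1, h1'⟩ <;>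
        rcases round_out a₀ _ _ hry with h2 | ⟨h2, h2'⟩
      · exact hgh0 (h1.symm.trans h2)
      · exact hg0 (h1.symm.trans h2')
      · exact hh0 (h2.symm.trans h1')
      · exact hgh0 (h1.symm.trans h2)
    · rw [Finset.card_image_of_injective _ hembinj, Finset.card_univ, Fintype.card_fun,
        hcard, Fintype.card_fin]
  · -- converse
    rintro n ⟨f₁, f₂, C, hC, rfl⟩
    choose ψ hne hcompat using fun j => exists_coloring A a₀ a₁ h01 (f₂ j)
    set F : (Fin i → Fin 3 → A) → (Fin i → {a : A // a ≠ a₀}) :=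
      fun x j => ⟨ψ j (x j), hne j (x j)⟩ with hF
    have hinj : Set.InjOn F C := by
      intro x hx y hy hFxy
      by_contra hxy
      have hwit : ∀ j, ∃ w, w ∈ roundFan (f₁ j) (f₂ j) (x j) ∧
          w ∈ roundFan (f₁ j) (f₂ j) (y j) := by
        intro j
        have hψ : ψ j (x j) = ψ j (y j) := Subtype.ext_iff.mp (congrFun hFxy j)
        rcases hcompat j (x j) (y j) hψ with h | h
        · exact confus (f₁ j) (f₂ j) (x j) (y j) h
        · obtain ⟨w, hw1, hw2⟩ := confus (f₁ j) (f₂ j) (y j) (x j) h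
          exact ⟨w, hw2, hw1⟩
      choose w hw1 hw2 using hwit
      have hzx : w ∈ diamondA2Channel i f₁ f₂ x := (mem_diamond_iff _ _ _ _).mpr hw1
      have hzy : w ∈ diamondA2Channel i f₁ f₂ y := (mem_diamond_iff _ _ _ _).mpr hw2
      have hemp := hC x hx y hy hxy
      have : w ∈ (∅ : Set (Fin i → A × A)) := hemp ▸ Set.mem_inter hzx hzy
      exact this
    calc C.card ≤ (Finset.univ : Finset (Fin i → {a : A // a ≠ a₀})).card :=
          Finset.card_le_card_of_injOn F (fun a _ => Finset.mem_univ _) hinj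
      _ = (Fintype.card A - 1) ^ i := by
          rw [Finset.card_univ, Fintype.card_fun, hcard, Fintype.card_fin]
end

section
/- For every integer i ≥ 1 and every finite alphabet A with |A| ≥ 2, the maximum cardinality of a code C ⊆ (A⁴)ⁱ that is unambiguous for the Scenario-A.1 i-shot Mirrored Diamond channel, taken over all choices of per-round node functions (f₁ʲ, f₂ʲ : A² → A for j = 1,…,i), equals |A|ⁱ. Equivalently, the i-shot capacity of the Mirrored Diamond Network when the adversary must attack the same edge in every round is 1, the same as its one-shot capacity. -/
/-- The `i`-shot Mirrored Diamond Network channel in Scenario A.1: the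
adversary picks a single edge `k ∈ {1,2,3,4}` and may corrupt only that edge,
the same one in every round.  Per-round node functions are
`f₁ʲ, f₂ʲ : A² → A`. -/
def mirroredDiamondA1Channel {A : Type*} (i : ℕ)
    (f₁ : Fin i → A → A → A) (f₂ : Fin i → A → A → A)
    (x : Fin i → Fin 4 → A) : Set (Fin i → A × A) :=
  { z | ∃ k : Fin 4, ∃ y : Fin i → Fin 4 → A,
      (∀ j : Fin i, ∀ m : Fin 4, m ≠ k → y j m = x j m) ∧
      (∀ j : Fin i, z j = (f₁ j (y j 0) (y j 1), f₂ j (y j 2) (y j 3))) }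

section aux

variable {A : Type*} [Fintype A] [DecidableEq A]

/-- The comparison function used at both intermediate nodes. -/
def mdCmp (e : A) (u v : A) : A := if u = v then u else e

lemma mdCmp_mem (e : A) (a u v : A) (h : u = a ∨ v = a) :
    mdCmp e u v = a ∨ mdCmp e u v = e := by
  unfold mdCmp
  by_cases huv : u = v
  · rw [if_pos huv]
    left
    rcases h with h | h
    · exact h
    · exact huv.trans h
  · rw [if_neg huv]; right; rfl

/-- Key structural fact about fan-out sets of repetition codewords. -/
lemma mdRep_fanout (e : A) {i : ℕ} (m : Fin i → A)
    (z : Fin i → A × A)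
    (hz : z ∈ mirroredDiamondA1Channel i (fun _ => mdCmp e) (fun _ => mdCmp e)
      (fun j _ => m j)) :
    ((∀ j, (z j).1 = m j) ∧ (∀ j, (z j).2 = m j ∨ (z j).2 = e)) ∨
    ((∀ j, (z j).2 = m j) ∧ (∀ j, (z j).1 = m j ∨ (z j).1 = e)) := by
  obtain ⟨k, y, hy, hzy⟩ := hz
  by_cases hk : k = 0 ∨ k = 1
  · right
    constructor
    · intro j
      have h2 : y j 2 = m j := hy j 2 (by rcases hk with h | h <;> subst h <;> decide)
      have h3 : y j 3 = m j := hy j 3 (by rcases hk with h | h <;> subst h <;> decide)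
      rw [hzy j]; simp [mdCmp, h2, h3]
    · intro j
      rw [hzy j]
      apply mdCmp_mem
      rcases hk with h | h
      · right; exact hy j 1 (by subst h; decide)
      · left; exact hy j 0 (by subst h; decide)
  · left
    push_neg at hk
    obtain ⟨hk0, hk1⟩ := hk
    constructor
    · intro j
      have h0 : y j 0 = m j := hy j 0 (fun h => hk0 h.symm)
      have h1 : y j 1 = m j := hy j 1 (fun h => hk1 h.symm)
      rw [hzy j]; simp [mdCmp, h0, h1]
    · intro j
      rw [hzy j]
      apply mdCmp_mem
      by_cases h2 : k = 2
      · right; exact hy j 3 (by subst h2; decide)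
      · left; exact hy j 2 (fun h => h2 h.symm)

/-- Mixed-side case: contradiction. -/
lemma mdMixed (e : A) {i : ℕ} (m m' : Fin i → A) (z : Fin i → A × A) (j0 : Fin i)
    (hj0 : m j0 ≠ m' j0)
    (h1 : ∀ j, (z j).1 = m j) (h2 : ∀ j, (z j).2 = m j ∨ (z j).2 = e)
    (h1' : ∀ j, (z j).2 = m' j) (h2' : ∀ j, (z j).1 = m' j ∨ (z j).1 = e) :
    False := by
  have hme : m j0 = e := by
    rcases h2' j0 with h | h
    · exact absurd ((h1 j0).symm.trans h) hj0
    · exact (h1 j0).symm.trans h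
  rcases h2 j0 with h | h
  · exact hj0 (((h1' j0).symm.trans h).symm)
  · exact hj0 (hme.trans (((h1' j0).symm.trans h).symm))

end aux

/-- Scenario A.1 multishot capacity of the Mirrored Diamond Network: the
maximum cardinality of an unambiguous code, over all choices of per-round node
functions, is `|A|^i`. -/
theorem mirrored_diamond_A1_multishot_capacity
    (A : Type*) [Fintype A] [DecidableEq A] (hA : 2 ≤ Fintype.card A)
    (i : ℕ) (hi : 1 ≤ i) :
    IsGreatest { n : ℕ |
        ∃ (f₁ : Fin i → A → A → A) (f₂ : Fin i → A → A → A)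
          (C : Finset (Fin i → Fin 4 → A)),
          Unambiguous (mirroredDiamondA1Channel i f₁ f₂) C ∧ C.card = n }
      (Fintype.card A ^ i) := by
  have hAne : Nonempty A := Fintype.card_pos_iff.mp (by omega)
  obtain ⟨e⟩ := hAne
  constructor
  · -- achievability
    refine ⟨fun _ => mdCmp e, fun _ => mdCmp e,
      Finset.univ.image (fun m : Fin i → A => fun j (_ : Fin 4) => m j), ?_, ?_⟩
    · rintro x hx x' hx' hne
      simp only [Finset.mem_image, Finset.mem_univ, true_and] at hx hx'
      obtain ⟨m, rfl⟩ := hx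
      obtain ⟨m', rfl⟩ := hx'
      have hmm : m ≠ m' := by
        intro h; exact hne (by rw [h])
      ext z
      simp only [Set.mem_inter_iff, Set.mem_empty_iff_false, iff_false]
      rintro ⟨hz, hz'⟩
      obtain ⟨j0, hj0⟩ := Function.ne_iff.mp hmm
      rcases mdRep_fanout e m z hz with ⟨h1, h2⟩ | ⟨h1, h2⟩ <;>
        rcases mdRep_fanout e m' z hz' with ⟨h1', h2'⟩ | ⟨h1', h2'⟩
      · exact hmm (funext fun j => (h1 j).symm.trans (h1' j))
      · exact mdMixed e m m' z j0 hj0 h1 h2 h1' h2'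
      · exact mdMixed e m' m z j0 (Ne.symm hj0) h1' h2' h1 h2
      · exact hmm (funext fun j => (h1 j).symm.trans (h1' j))
    · rw [Finset.card_image_of_injective _ ?_, Finset.card_univ, Fintype.card_fun,
        Fintype.card_fin]
      intro m m' h
      funext j
      have := congrFun (congrFun h j) 0
      exact this
  · -- upper bound
    rintro n ⟨f₁, f₂, C, hC, rfl⟩
    have key : Set.InjOn (fun x : Fin i → Fin 4 → A => fun j => f₁ j (x j 0) (x j 1))
        (C : Set (Fin i → Fin 4 → A)) := by
      intro x hx x' hx' hF
      by_contra hne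
      have hdisj := hC x hx x' hx' hne
      set z : Fin i → A × A := fun j => (f₁ j (x j 0) (x j 1), f₂ j (x' j 2) (x j 3)) with hzdef
      have hz1 : z ∈ mirroredDiamondA1Channel i f₁ f₂ x := by
        refine ⟨2, fun j m => if m = 2 then x' j 2 else x j m, ?_, ?_⟩
        · intro j m hm; simp [hm]
        · intro j; simp [hzdef]
      have hz2 : z ∈ mirroredDiamondA1Channel i f₁ f₂ x' := by
        refine ⟨3, fun j m => if m = 3 then x j 3 else x' j m, ?_, ?_⟩
        · intro j m hm; simp [hm]
        · intro j
          simp only [hzdef]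
          have : f₁ j (x j 0) (x j 1) = f₁ j (x' j 0) (x' j 1) := congrFun hF j
          simp [this]
      have : z ∈ (∅ : Set (Fin i → A × A)) := hdisj ▸ ⟨hz1, hz2⟩
      exact this.elim
    calc C.card ≤ (Finset.univ : Finset (Fin i → A)).card := by
          apply Finset.card_le_card_of_injOn _ (fun _ _ => Finset.mem_univ _)
          exact fun a ha b hb => key ha hb
      _ = Fintype.card A ^ i := by rw [Finset.card_univ, Fintype.card_fun, Fintype.card_fin]
end

section
/- Let A be a finite alphabet with |A| ≥ 2 and let t, i ≥ 1 be integers. The maximum cardinality of a code C ⊆ (A^{2t+1})ⁱ with the property that for all distinct x = (x¹,…,xⁱ) and y = (y¹,…,yⁱ) in C there exists a block index j ∈ {1,…,i} with d_H(xʲ, yʲ) ≥ 2t+1 (i.e. xʲ and yʲ differ in every one of their 2t+1 coordinates) is exactly |A|ⁱ. In particular, no such code of cardinality |A|ⁱ + 1 exists, and the bound is attained by the blockwise repetition code {((a₁,…,a₁), …, (a_i,…,a_i)) : (a₁,…,a_i) ∈ Aⁱ}. -/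
/-- The blockwise repetition code: each of the `i` blocks of length `2t+1` is a
constant (repeated) symbol. -/
def repCode (A : Type*) [Fintype A] [DecidableEq A] (t i : ℕ) :
    Finset (Fin i → Fin (2 * t + 1) → A) :=
  Finset.image (fun a : Fin i → A => fun j _ => a j) Finset.univ

/-- Let `A` be a finite alphabet with `|A| ≥ 2` and `t, i ≥ 1`.  Any code
`C ⊆ (A^{2t+1})^i` such that any two distinct codewords have some block at
Hamming distance `≥ 2t+1` has cardinality at most `|A|^i`; moreover the
blockwise repetition code has this property and attains cardinality `|A|^i`. -/
theorem blockwise_full_distance_code_max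
    (A : Type*) [Fintype A] [DecidableEq A] (hA : 2 ≤ Fintype.card A)
    (t i : ℕ) (ht : 1 ≤ t) (hi : 1 ≤ i) :
    (∀ C : Finset (Fin i → Fin (2 * t + 1) → A),
        (∀ x ∈ C, ∀ y ∈ C, x ≠ y →
            ∃ j : Fin i, 2 * t + 1 ≤ hammingDist (x j) (y j)) →
        C.card ≤ Fintype.card A ^ i) ∧
    (∀ x ∈ repCode A t i, ∀ y ∈ repCode A t i, x ≠ y →
        ∃ j : Fin i, 2 * t + 1 ≤ hammingDist (x j) (y j)) ∧
    (repCode A t i).card = Fintype.card A ^ i := by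
  refine ⟨?_, ?_, ?_⟩
  · intro C hC
    have hinj : Set.InjOn (fun x : Fin i → Fin (2 * t + 1) → A => fun j => x j 0) C := by
      intro x hx y hy hxy
      by_contra hne
      obtain ⟨j, hj⟩ := hC x hx y hy hne
      -- all 2t+1 coordinates differ in block j, in particular coordinate 0
      have hall : x j 0 ≠ y j 0 := by
        have hcard : (Finset.univ.filter fun k : Fin (2 * t + 1) => x j k ≠ y j k).card
            = 2 * t + 1 := by
          have hle : (Finset.univ.filter fun k : Fin (2 * t + 1) => x j k ≠ y j k).card
              ≤ 2 * t + 1 := by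
            simpa using (Finset.card_filter_le Finset.univ
              (fun k : Fin (2 * t + 1) => x j k ≠ y j k))
          have : 2 * t + 1 ≤ (Finset.univ.filter
              fun k : Fin (2 * t + 1) => x j k ≠ y j k).card := hj
          omega
        have hmem : (0 : Fin (2 * t + 1)) ∈
            (Finset.univ.filter fun k : Fin (2 * t + 1) => x j k ≠ y j k) := by
          have := Finset.eq_univ_of_card _ (hcard.trans (Fintype.card_fin _).symm)
          rw [this]; exact Finset.mem_univ _
        exact (Finset.mem_filter.mp hmem).2
      exact hall (congrFun hxy j)
    calc C.card = (C.image fun x => fun j => x j 0).card :=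
          (Finset.card_image_of_injOn hinj).symm
      _ ≤ Fintype.card (Fin i → A) := Finset.card_le_univ _
      _ = Fintype.card A ^ i := by simp
  · intro x hx y hy hne
    simp only [repCode, Finset.mem_image, Finset.mem_univ, true_and] at hx hy
    obtain ⟨a, rfl⟩ := hx
    obtain ⟨b, rfl⟩ := hy
    have : a ≠ b := fun h => hne (by rw [h])
    obtain ⟨j, hj⟩ := Function.ne_iff.mp this
    refine ⟨j, ?_⟩
    have : (Finset.univ.filter fun k : Fin (2 * t + 1) => a j ≠ b j) = Finset.univ := by
      simp [hj]
    calc 2 * t + 1 = Fintype.card (Fin (2 * t + 1)) := by simp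
      _ = (Finset.univ.filter fun k : Fin (2 * t + 1) => a j ≠ b j).card := by
          rw [this]; rfl
      _ ≤ hammingDist (fun _ => a j) (fun _ => b j) := le_of_eq rfl
  · rw [repCode, Finset.card_image_of_injective _ ?_, Finset.card_univ]
    · simp
    · intro a b h
      funext j
      exact congrFun (congrFun h j) ⟨0, by omega⟩
end

section
/- Let t ≥ 2 and i ≥ 1 be integers and A a finite alphabet with |A| ≥ 2. The maximum cardinality of a code C ⊆ (A^{2t+1})ⁱ that is unambiguous for the Scenario-A.1 i-shot channel of the family-𝔠_t network ([t, t+1],[t, t]), taken over all choices of per-round node functions (f₁ʲ : Aᵗ → Aᵗ, f₂ʲ : A^{t+1} → Aᵗ for j = 1,…,i), equals |A|ⁱ. Equivalently, the i-shot capacity of 𝔠_t is 1, the same as its one-shot capacity, in both adversarial scenarios. -/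
/-- The first `t` coordinates of a vector of length `2t+1` (the input of node
`V₁`). -/
def firstPartC (t : ℕ) {A : Type*} (v : Fin (2 * t + 1) → A) : Fin t → A :=
  fun m => v ⟨m.val, by have h := m.isLt; omega⟩

/-- The last `t+1` coordinates of a vector of length `2t+1` (the input of node
`V₂`). -/
def lastPartC (t : ℕ) {A : Type*} (v : Fin (2 * t + 1) → A) : Fin (t + 1) → A :=
  fun m => v ⟨t + m.val, by have h := m.isLt; omega⟩

/-- The `i`-shot channel of the family-`𝔠_t` network `([t,t+1],[t,t])` in
Scenario A.1: the adversary picks a set `S` of at most `t` of the `2t+1` source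
edges and may corrupt only those edges, the same ones in every round.
Per-round node functions are `f₁ʲ : Aᵗ → Aᵗ` and `f₂ʲ : A^{t+1} → Aᵗ`. -/
def famCA1Channel {A : Type*} (t i : ℕ)
    (f₁ : Fin i → (Fin t → A) → (Fin t → A))
    (f₂ : Fin i → (Fin (t + 1) → A) → (Fin t → A))
    (x : Fin i → Fin (2 * t + 1) → A) :
    Set (Fin i → (Fin t → A) × (Fin t → A)) :=
  { z | ∃ S : Finset (Fin (2 * t + 1)), S.card ≤ t ∧
      ∃ y : Fin i → Fin (2 * t + 1) → A,
        (∀ j : Fin i, ∀ m, m ∉ S → y j m = x j m) ∧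
        (∀ j : Fin i,
          z j = (f₁ j (firstPartC t (y j)), f₂ j (lastPartC t (y j)))) }

section AuxHam

set_option linter.unusedSectionVars false

variable {A : Type*} [Fintype A] [DecidableEq A]

lemma dist_two_consts {n : ℕ} {a b : A} (hab : a ≠ b) (w : Fin (n+1) → A) :
    n + 1 ≤ hammingDist w (fun _ => a) + hammingDist w (fun _ => b) := by
  have h1 : hammingDist (fun _ : Fin (n+1) => a) (fun _ => b) = n + 1 := by
    simp [hammingDist, hab]
  have h2 := hammingDist_triangle (fun _ : Fin (n+1) => a) w (fun _ => b)
  rw [hammingDist_comm (fun _ : Fin (n+1) => a) w] at h2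
  omega

variable [Nonempty A]

noncomputable def clo (t : ℕ) (u : Fin (t+1) → A) : A :=
  (Finset.exists_min_image Finset.univ (fun c : A => hammingDist u (fun _ => c))
    Finset.univ_nonempty).choose

lemma clo_min (t : ℕ) (u : Fin (t+1) → A) (c : A) :
    hammingDist u (fun _ => clo t u) ≤ hammingDist u (fun _ => c) := by
  obtain ⟨-, h2⟩ := (Finset.exists_min_image Finset.univ
    (fun c : A => hammingDist u (fun _ => c)) Finset.univ_nonempty).choose_spec
  exact h2 c (Finset.mem_univ c)

noncomputable def rad (t : ℕ) (u : Fin (t+1) → A) : ℕ :=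
  hammingDist u (fun _ => clo t u)

lemma rad_le (t : ℕ) (u : Fin (t+1) → A) : rad t u ≤ t + 1 := by
  have := hammingDist_le_card_fintype (x := u) (y := fun _ => clo t u)
  simpa [rad] using this

lemma key_lemma (t : ℕ) {a b : A} (hab : a ≠ b) {u u' : Fin (t+1) → A}
    (hd : hammingDist u (fun _ => a) + hammingDist u' (fun _ => b) ≤ t)
    (hc : clo t u = clo t u')
    (hm : min (rad t u) (t+1 - rad t u) = min (rad t u') (t+1 - rad t u')) :
    False := by
  have h1 : rad t u ≤ hammingDist u (fun _ => a) := clo_min t u a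
  have h2 : rad t u' ≤ hammingDist u' (fun _ => b) := clo_min t u' b
  have hrr : rad t u = rad t u' := by omega
  by_cases hca : clo t u = a
  · have e1 : rad t u = hammingDist u (fun _ => a) := by rw [rad, hca]
    have hb : b ≠ clo t u' := by rw [← hc, hca]; exact hab.symm
    have g2 := dist_two_consts hb u'
    have e2 : hammingDist u' (fun _ => clo t u') = rad t u' := rfl
    omega
  · by_cases hcb : clo t u = b
    · have e2 : rad t u' = hammingDist u' (fun _ => b) := by rw [rad, ← hc, hcb]
      have ha : a ≠ clo t u := fun h => hca h.symm
      have g1 := dist_two_consts ha u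
      have e1 : hammingDist u (fun _ => clo t u) = rad t u := rfl
      omega
    · have ha : a ≠ clo t u := fun h => hca h.symm
      have hb : b ≠ clo t u' := by rw [← hc]; exact fun h => hcb h.symm
      have g1 := dist_two_consts ha u
      have g2 := dist_two_consts hb u'
      have e1 : hammingDist u (fun _ => clo t u) = rad t u := rfl
      have e2 : hammingDist u' (fun _ => clo t u') = rad t u' := rfl
      omega

end AuxHam

lemma half_bound : ∀ n : ℕ, (n+3)/2 + 1 ≤ 2^(n+1) := by
  intro n
  induction n with
  | zero => norm_num
  | succ k ih =>
    have h2 : 1 ≤ 2^(k+1) := Nat.one_le_two_pow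
    have h3 : 2^(k+1+1) = 2 * 2^(k+1) := by rw [pow_succ]; ring
    omega

lemma card_bound {A : Type*} [Fintype A] (hA : 2 ≤ Fintype.card A) {t : ℕ} (ht : 2 ≤ t) :
    Fintype.card A * ((t+1)/2 + 1) ≤ Fintype.card A ^ t := by
  obtain ⟨s, rfl⟩ : ∃ s, t = s + 2 := ⟨t - 2, by omega⟩
  have h1 : (s+2+1)/2 + 1 ≤ 2^(s+1) := half_bound s
  have h2 : 2^(s+1) ≤ Fintype.card A ^ (s+1) := Nat.pow_le_pow_left hA _
  calc Fintype.card A * ((s+2+1)/2+1) ≤ Fintype.card A * Fintype.card A ^ (s+1) :=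
        Nat.mul_le_mul_left _ (le_trans h1 h2)
    _ = Fintype.card A ^ (s+2) := by ring

/-- Scenario A.1 multishot capacity of the family `𝔠_t = ([t,t+1],[t,t])`
(`t ≥ 2`): the maximum cardinality of an unambiguous code, over all choices of
per-round node functions, is `|A|^i`. -/
theorem famC_multishot_capacity
    (A : Type*) [Fintype A] [DecidableEq A] (hA : 2 ≤ Fintype.card A)
    (t i : ℕ) (ht : 2 ≤ t) (hi : 1 ≤ i) :
    IsGreatest { n : ℕ |
        ∃ (f₁ : Fin i → (Fin t → A) → (Fin t → A))
          (f₂ : Fin i → (Fin (t + 1) → A) → (Fin t → A))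
          (C : Finset (Fin i → Fin (2 * t + 1) → A)),
          Unambiguous (famCA1Channel t i f₁ f₂) C ∧ C.card = n }
      (Fintype.card A ^ i) := by
  have hApos : 0 < Fintype.card A := by omega
  have hAne : Nonempty A := Fintype.card_pos_iff.mp hApos
  constructor
  · -- Achievability
    have hcard : Fintype.card (A × Fin ((t+1)/2 + 1)) ≤ Fintype.card (Fin t → A) := by
      rw [Fintype.card_prod, Fintype.card_fin, Fintype.card_fun, Fintype.card_fin]
      exact card_bound hA ht
    obtain ⟨e⟩ := Function.Embedding.nonempty_of_card_le hcard
    set g : (Fin (t+1) → A) → (Fin t → A) := fun u =>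
      e (clo t u, ⟨min (rad t u) (t+1 - rad t u), by omega⟩) with hg
    refine ⟨fun _ => id, fun _ => g,
      Finset.univ.image (fun a : Fin i → A => (fun j _ => a j : Fin i → Fin (2*t+1) → A)),
      ?_, ?_⟩
    · -- Unambiguity
      intro x hx y hy hne
      obtain ⟨a, -, rfl⟩ := Finset.mem_image.mp hx
      obtain ⟨b, -, rfl⟩ := Finset.mem_image.mp hy
      have hab : a ≠ b := fun h => hne (by rw [h])
      obtain ⟨j, hj⟩ := Function.ne_iff.mp hab
      rw [Set.eq_empty_iff_forall_notMem]
      rintro z ⟨⟨S, hS, ya, hya, hza⟩, ⟨S', hS', yb, hyb, hzb⟩⟩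
      have hout := (hza j).symm.trans (hzb j)
      rw [Prod.mk.injEq] at hout
      obtain ⟨hfst, hsnd⟩ := hout
      -- decode the second component
      have hsnd' := e.injective hsnd
      rw [Prod.mk.injEq, Fin.mk.injEq] at hsnd'
      obtain ⟨hcl, hmin⟩ := hsnd'
      -- first part forces many errors among the first t coordinates
      have hb0 : t ≤ (S.filter (fun m => m.val < t)).card
          + (S'.filter (fun m => m.val < t)).card := by
        have hkey := Finset.card_le_card_of_injOn
          (f := fun m : Fin t => (⟨m.val, by omega⟩ : Fin (2*t+1)))
          (s := (Finset.univ : Finset (Fin t)))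
          (t := S.filter (fun m => m.val < t) ∪ S'.filter (fun m => m.val < t))
          ?_ ?_
        · have := Finset.card_union_le (S.filter (fun m => m.val < t))
            (S'.filter (fun m => m.val < t))
          simp only [Finset.card_univ, Fintype.card_fin] at hkey
          omega
        · intro m _
          by_cases hmS : (⟨m.val, by omega⟩ : Fin (2*t+1)) ∈ S
          · exact Finset.mem_union_left _ (Finset.mem_filter.mpr ⟨hmS, m.isLt⟩)
          · by_cases hmS' : (⟨m.val, by omega⟩ : Fin (2*t+1)) ∈ S'
            · exact Finset.mem_union_right _ (Finset.mem_filter.mpr ⟨hmS', m.isLt⟩)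
            · exfalso
              have h1 : ya j ⟨m.val, by omega⟩ = a j := hya j _ hmS
              have h2 : yb j ⟨m.val, by omega⟩ = b j := hyb j _ hmS'
              have h3 : firstPartC t (ya j) m = firstPartC t (yb j) m := congrFun hfst m
              exact hj (by rw [← h1, ← h2]; exact h3)
        · intro m _ m' _ h
          have h2 := congrArg Fin.val h
          exact Fin.ext h2
      -- errors of ya in the last part
      have hb1 : hammingDist (lastPartC t (ya j)) (fun _ => a j)
          ≤ (S.filter (fun m => ¬ m.val < t)).card := by
        unfold hammingDist
        apply Finset.card_le_card_of_injOn
          (fun m : Fin (t+1) => (⟨t + m.val, by omega⟩ : Fin (2*t+1)))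
        · intro m hm
          simp only [Finset.mem_coe, Finset.mem_filter, Finset.mem_univ, true_and] at hm ⊢
          refine ⟨?_, by omega⟩
          by_contra hns
          exact hm (hya j ⟨t + m.val, by omega⟩ hns)
        · intro m _ m' _ h
          have h2 := congrArg Fin.val h
          simp only at h2
          exact Fin.ext (by omega)
      have hb2 : hammingDist (lastPartC t (yb j)) (fun _ => b j)
          ≤ (S'.filter (fun m => ¬ m.val < t)).card := by
        unfold hammingDist
        apply Finset.card_le_card_of_injOn
          (fun m : Fin (t+1) => (⟨t + m.val, by omega⟩ : Fin (2*t+1)))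
        · intro m hm
          simp only [Finset.mem_coe, Finset.mem_filter, Finset.mem_univ, true_and] at hm ⊢
          refine ⟨?_, by omega⟩
          by_contra hns
          exact hm (hyb j ⟨t + m.val, by omega⟩ hns)
        · intro m _ m' _ h
          have h2 := congrArg Fin.val h
          simp only at h2
          exact Fin.ext (by omega)
      have hc1 := Finset.card_filter_add_card_filter_not
        (s := S) (p := fun m => m.val < t)
      have hc2 := Finset.card_filter_add_card_filter_not
        (s := S') (p := fun m => m.val < t)
      have hd : hammingDist (lastPartC t (ya j)) (fun _ => a j)
          + hammingDist (lastPartC t (yb j)) (fun _ => b j) ≤ t := by omega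
      exact key_lemma t hj hd hcl hmin
    · -- cardinality
      rw [Finset.card_image_of_injective _ ?_, Finset.card_univ, Fintype.card_fun,
        Fintype.card_fin]
      intro a a' h
      funext j
      exact congrFun (congrFun h j) ⟨0, by omega⟩
  · -- Upper bound
    rintro n ⟨f₁, f₂, C, hC, rfl⟩
    have hinj : Set.InjOn (fun x : Fin i → Fin (2*t+1) → A =>
        (fun j => x j ⟨0, by omega⟩ : Fin i → A)) C := by
      intro x hx x' hx' hphi
      by_contra hne
      set S : Finset (Fin (2*t+1)) :=
        Finset.univ.filter (fun m : Fin (2*t+1) => 0 < m.val ∧ m.val ≤ t) with hSdef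
      set S' : Finset (Fin (2*t+1)) :=
        Finset.univ.filter (fun m : Fin (2*t+1) => t < m.val) with hS'def
      have hScard : S.card ≤ t := by
        have h := Finset.card_le_card_of_injOn (fun m : Fin (2*t+1) => m.val)
          (s := S) (t := Finset.Icc 1 t)
          (fun m hm => by
            simp only [hSdef, Finset.mem_coe, Finset.mem_filter] at hm
            simp only [Finset.mem_coe, Finset.mem_Icc]; omega)
          (fun m _ m' _ h => Fin.ext h)
        simpa using h
      have hS'card : S'.card ≤ t := by
        have h := Finset.card_le_card_of_injOn (fun m : Fin (2*t+1) => m.val)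
          (s := S') (t := Finset.Icc (t+1) (2*t))
          (fun m hm => by
            simp only [hS'def, Finset.mem_coe, Finset.mem_filter] at hm
            have h2 := m.isLt
            simp only [Finset.mem_coe, Finset.mem_Icc]; omega)
          (fun m _ m' _ h => Fin.ext h)
        have hIcc : (Finset.Icc (t+1) (2*t)).card = t := by
          rw [Nat.card_Icc]; omega
        omega
      have hwx : ∀ j : Fin i, ∀ m, m ∉ S →
          (if m.val = 0 then x j m else if m.val ≤ t then x' j m else x j m) = x j m := by
        intro j m hm
        simp only [hSdef, Finset.mem_filter, Finset.mem_univ, true_and, not_and,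
          not_le] at hm
        split_ifs with h0 h1
        · rfl
        · omega
        · rfl
      have hwx' : ∀ j : Fin i, ∀ m, m ∉ S' →
          (if m.val = 0 then x j m else if m.val ≤ t then x' j m else x j m) = x' j m := by
        intro j m hm
        simp only [hS'def, Finset.mem_filter, Finset.mem_univ, true_and, not_lt] at hm
        split_ifs with h0
        · have hm0 : m = ⟨0, by omega⟩ := Fin.ext h0
          rw [hm0]
          exact congrFun hphi j
        · rfl
      have hmem : (fun j => (f₁ j (firstPartC t (fun m =>
            if m.val = 0 then x j m else if m.val ≤ t then x' j m else x j m)),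
            f₂ j (lastPartC t (fun m =>
            if m.val = 0 then x j m else if m.val ≤ t then x' j m else x j m))))
          ∈ famCA1Channel t i f₁ f₂ x ∩ famCA1Channel t i f₁ f₂ x' := by
        constructor
        · exact ⟨S, hScard, fun j m =>
            if m.val = 0 then x j m else if m.val ≤ t then x' j m else x j m,
            hwx, fun j => rfl⟩
        · exact ⟨S', hS'card, fun j m =>
            if m.val = 0 then x j m else if m.val ≤ t then x' j m else x j m,
            hwx', fun j => rfl⟩
      have hempty := hC x hx x' hx' hne
      rw [Set.eq_empty_iff_forall_notMem] at hempty
      exact hempty _ hmem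
    have hle := Finset.card_le_card_of_injOn _
      (fun x _ => Finset.mem_univ ((fun j => x j ⟨0, by omega⟩ : Fin i → A))) hinj
    simpa [Fintype.card_fun] using hle
end

section
/- Let t ≥ 1 and i ≥ 1 be integers and A a finite alphabet with |A| ≥ 2. The maximum cardinality of a code C ⊆ (A^{4t})ⁱ that is unambiguous for the Scenario-A.1 i-shot channel of the family-𝔡_t network ([2t, 2t],[1, 1]), taken over all choices of per-round node functions (f₁ʲ, f₂ʲ : A^{2t} → A for j = 1,…,i), equals |A|ⁱ. Equivalently, the i-shot capacity of 𝔡_t is 1, the same as its one-shot capacity, in both adversarial scenarios. -/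
/-- The first `2t` coordinates of a vector of length `4t` (the input of node
`V₁`). -/
def firstPartD (t : ℕ) {A : Type*} (v : Fin (4 * t) → A) : Fin (2 * t) → A :=
  fun m => v ⟨m.val, by have h := m.isLt; omega⟩

/-- The last `2t` coordinates of a vector of length `4t` (the input of node
`V₂`). -/
def lastPartD (t : ℕ) {A : Type*} (v : Fin (4 * t) → A) : Fin (2 * t) → A :=
  fun m => v ⟨2 * t + m.val, by have h := m.isLt; omega⟩

/-- The `i`-shot channel of the family-`𝔡_t` network `([2t,2t],[1,1])` in
Scenario A.1: the adversary picks a set `S` of at most `t` of the `4t` source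
edges and may corrupt only those edges, the same ones in every round.
Per-round node functions are `f₁ʲ, f₂ʲ : A^{2t} → A`. -/
def famDA1Channel {A : Type*} (t i : ℕ)
    (f₁ : Fin i → (Fin (2 * t) → A) → A)
    (f₂ : Fin i → (Fin (2 * t) → A) → A)
    (x : Fin i → Fin (4 * t) → A) : Set (Fin i → A × A) :=
  { z | ∃ S : Finset (Fin (4 * t)), S.card ≤ t ∧
      ∃ y : Fin i → Fin (4 * t) → A,
        (∀ j : Fin i, ∀ m, m ∉ S → y j m = x j m) ∧
        (∀ j : Fin i,
          z j = (f₁ j (firstPartD t (y j)), f₂ j (lastPartD t (y j)))) }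


set_option linter.unusedSectionVars false

section Aux
variable {A : Type*} [Fintype A] [DecidableEq A]

/-- number of coordinates of `v` equal to `e`. -/
def cntD (t : ℕ) (v : Fin (2 * t) → A) (e : A) : ℕ :=
  (Finset.univ.filter (fun m => v m = e)).card

/-- plurality decoder: the unique symbol appearing more than `t` times, else `d`. -/
noncomputable def plurD (t : ℕ) (d : A) (v : Fin (2 * t) → A) : A :=
  if h : ∃ e, t < cntD t v e then h.choose else d

lemma cntD_add_cntD_le (t : ℕ) (v : Fin (2 * t) → A) {e e' : A} (h : e ≠ e') :
    cntD t v e + cntD t v e' ≤ 2 * t := by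
  classical
  have hd : Disjoint (Finset.univ.filter (fun m => v m = e))
      (Finset.univ.filter (fun m => v m = e')) := by
    rw [Finset.disjoint_filter]
    intro m _ h1 h2
    exact h (h1 ▸ h2 ▸ rfl)
  have := Finset.card_union_of_disjoint hd
  have hle : (Finset.univ.filter (fun m => v m = e) ∪
      Finset.univ.filter (fun m => v m = e')).card ≤ Fintype.card (Fin (2 * t)) :=
    Finset.card_le_univ _
  simp only [Fintype.card_fin] at hle
  unfold cntD
  omega

lemma plurD_eq_of_lt {t : ℕ} {d : A} {v : Fin (2 * t) → A} {e : A}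
    (h : t < cntD t v e) : plurD t d v = e := by
  have hex : ∃ e, t < cntD t v e := ⟨e, h⟩
  rw [plurD, dif_pos hex]
  by_contra hne
  have h2 := hex.choose_spec
  have := cntD_add_cntD_le t v hne
  omega

lemma plurD_eq_or {t : ℕ} {d : A} {v : Fin (2 * t) → A} {e : A}
    (h : t ≤ cntD t v e) : plurD t d v = e ∨ plurD t d v = d := by
  rw [plurD]
  split
  · rename_i hex
    left
    by_contra hne
    have h2 := hex.choose_spec
    have := cntD_add_cntD_le t v hne
    omega
  · right; rfl

/-- counting lemma: if `y` agrees with the constant `a` outside `S`, `|S| ≤ t`. -/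
lemma cnt_bounds {t : ℕ} (ht : 1 ≤ t) (a : A) (S : Finset (Fin (4 * t)))
    (hS : S.card ≤ t) (y : Fin (4 * t) → A) (hy : ∀ m, m ∉ S → y m = a) :
    t ≤ cntD t (firstPartD t y) a ∧ t ≤ cntD t (lastPartD t y) a ∧
      (t < cntD t (firstPartD t y) a ∨ t < cntD t (lastPartD t y) a) := by
  classical
  set B1 := Finset.univ.filter (fun m => ¬ firstPartD t y m = a) with hB1
  set B2 := Finset.univ.filter (fun m => ¬ lastPartD t y m = a) with hB2
  have hsum1 : cntD t (firstPartD t y) a + B1.card = 2 * t := by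
    have := Finset.card_filter_add_card_filter_not
      (s := (Finset.univ : Finset (Fin (2 * t)))) (p := fun m => firstPartD t y m = a)
    simpa [cntD, hB1, Fintype.card_fin] using this
  have hsum2 : cntD t (lastPartD t y) a + B2.card = 2 * t := by
    have := Finset.card_filter_add_card_filter_not
      (s := (Finset.univ : Finset (Fin (2 * t)))) (p := fun m => lastPartD t y m = a)
    simpa [cntD, hB2, Fintype.card_fin] using this
  have hb1 : B1.card ≤ (S.filter (fun k => k.val < 2 * t)).card := by
    apply Finset.card_le_card_of_injOn (fun m => (⟨m.val, by omega⟩ : Fin (4 * t)))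
    · intro m hm
      rw [hB1, Finset.mem_coe, Finset.mem_filter] at hm
      rw [Finset.mem_coe, Finset.mem_filter]
      refine ⟨?_, m.isLt⟩
      by_contra hns
      exact hm.2 (hy _ hns)
    · intro m _ m' _ hmm
      simp only [Fin.mk.injEq] at hmm
      exact Fin.ext hmm
  have hb2 : B2.card ≤ (S.filter (fun k => ¬ k.val < 2 * t)).card := by
    apply Finset.card_le_card_of_injOn (fun m => (⟨2 * t + m.val, by omega⟩ : Fin (4 * t)))
    · intro m hm
      rw [hB2, Finset.mem_coe, Finset.mem_filter] at hm
      rw [Finset.mem_coe, Finset.mem_filter]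
      refine ⟨?_, by show ¬ (2 * t + m.val < 2 * t); omega⟩
      by_contra hns
      exact hm.2 (hy _ hns)
    · intro m _ m' _ hmm
      simp only [Fin.mk.injEq] at hmm
      exact Fin.ext (by omega)
  have hsplit := Finset.card_filter_add_card_filter_not
    (s := S) (p := fun k => k.val < 2 * t)
  omega

end Aux


/-- Scenario A.1 multishot capacity of the family `𝔡_t = ([2t,2t],[1,1])`
(`t ≥ 1`): the maximum cardinality of an unambiguous code, over all choices of
per-round node functions, is `|A|^i`. -/
theorem famD_multishot_capacity
    (A : Type*) [Fintype A] [DecidableEq A] (hA : 2 ≤ Fintype.card A)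
    (t i : ℕ) (ht : 1 ≤ t) (hi : 1 ≤ i) :
    IsGreatest { n : ℕ |
        ∃ (f₁ : Fin i → (Fin (2 * t) → A) → A)
          (f₂ : Fin i → (Fin (2 * t) → A) → A)
          (C : Finset (Fin i → Fin (4 * t) → A)),
          Unambiguous (famDA1Channel t i f₁ f₂) C ∧ C.card = n }
      (Fintype.card A ^ i) := by
  classical
  have hAne : Nonempty A := Fintype.card_pos_iff.mp (by omega)
  obtain ⟨d⟩ := hAne
  constructor
  · -- achievability: repetition code with plurality decoding at each node
    refine ⟨fun _ => plurD t d, fun _ => plurD t d,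
      Finset.image (fun a : Fin i → A => (fun j _ => a j : Fin i → Fin (4 * t) → A))
        Finset.univ, ?_, ?_⟩
    · -- unambiguous
      intro x hx x' hx' hne
      rw [Finset.mem_image] at hx hx'
      obtain ⟨a, -, rfl⟩ := hx
      obtain ⟨b, -, rfl⟩ := hx'
      have hab : a ≠ b := fun h => hne (h ▸ rfl)
      obtain ⟨j, hj⟩ := Function.ne_iff.mp hab
      rw [Set.eq_empty_iff_forall_notMem]
      rintro z ⟨⟨S, hS, y, hy, hz⟩, ⟨S', hS', y', hy', hz'⟩⟩
      obtain ⟨h1, h2, h3⟩ := cnt_bounds ht (a j) S hS (y j) (fun m hm => hy j m hm)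
      obtain ⟨h1', h2', h3'⟩ := cnt_bounds ht (b j) S' hS' (y' j) (fun m hm => hy' j m hm)
      have e1 : (z j).1 = plurD t d (firstPartD t (y j)) := by rw [hz j]
      have e2 : (z j).2 = plurD t d (lastPartD t (y j)) := by rw [hz j]
      have e1' : (z j).1 = plurD t d (firstPartD t (y' j)) := by rw [hz' j]
      have e2' : (z j).2 = plurD t d (lastPartD t (y' j)) := by rw [hz' j]
      have pa : (z j).1 = a j ∨ (z j).1 = d := by rw [e1]; exact plurD_eq_or h1
      have qa : (z j).2 = a j ∨ (z j).2 = d := by rw [e2]; exact plurD_eq_or h2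
      have pb : (z j).1 = b j ∨ (z j).1 = d := by rw [e1']; exact plurD_eq_or h1'
      have qb : (z j).2 = b j ∨ (z j).2 = d := by rw [e2']; exact plurD_eq_or h2'
      have hone : (z j).1 = a j ∨ (z j).2 = a j := by
        rcases h3 with h | h
        · exact Or.inl (by rw [e1]; exact plurD_eq_of_lt h)
        · exact Or.inr (by rw [e2]; exact plurD_eq_of_lt h)
      have hone' : (z j).1 = b j ∨ (z j).2 = b j := by
        rcases h3' with h | h
        · exact Or.inl (by rw [e1']; exact plurD_eq_of_lt h)
        · exact Or.inr (by rw [e2']; exact plurD_eq_of_lt h)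
      have hp : (z j).1 = d := by
        rcases pa with h | h
        · rcases pb with h' | h'
          · exact (hj (h.symm.trans h')).elim
          · exact h'
        · exact h
      have hq : (z j).2 = d := by
        rcases qa with h | h
        · rcases qb with h' | h'
          · exact (hj (h.symm.trans h')).elim
          · exact h'
        · exact h
      have had : a j = d := by
        rcases hone with h | h
        · exact h.symm.trans hp
        · exact h.symm.trans hq
      have hbd : b j = d := by
        rcases hone' with h | h
        · exact h.symm.trans hp
        · exact h.symm.trans hq
      exact hj (had.trans hbd.symm)
    · -- cardinality
      rw [Finset.card_image_of_injective _ ?_, Finset.card_univ]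
      · simp [Fintype.card_fun]
      · intro a a' h
        funext j
        exact congrFun (congrFun h j) ⟨0, by omega⟩
  · -- upper bound
    rintro n ⟨f₁, f₂, C, hU, rfl⟩
    have hinj : Set.InjOn (fun x : Fin i → Fin (4 * t) → A =>
        (fun j => f₂ j (lastPartD t (x j)) : Fin i → A)) C := by
      intro x hx x' hx' hg
      by_contra hne
      simp only at hg
      set y : Fin i → Fin (4 * t) → A :=
        fun j m => if m.val < t then x' j m else x j m with hy
      set y' : Fin i → Fin (4 * t) → A :=
        fun j m => if t ≤ m.val ∧ m.val < 2 * t then x j m else x' j m with hy'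
      set z : Fin i → A × A :=
        fun j => (f₁ j (firstPartD t (y j)), f₂ j (lastPartD t (y j))) with hzdef
      have hlasty : ∀ j, lastPartD t (y j) = lastPartD t (x j) := by
        intro j; funext m
        show (if 2 * t + m.val < t then _ else _) = _
        rw [if_neg (by omega)]
        rfl
      have hlasty' : ∀ j, lastPartD t (y' j) = lastPartD t (x' j) := by
        intro j; funext m
        show (if t ≤ 2 * t + m.val ∧ 2 * t + m.val < 2 * t then _ else _) = _
        rw [if_neg (by omega)]
        rfl
      have hfirst : ∀ j, firstPartD t (y j) = firstPartD t (y' j) := by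
        intro j; funext m
        have hm := m.isLt
        show (if m.val < t then _ else _) = (if t ≤ m.val ∧ m.val < 2 * t then _ else _)
        by_cases h : m.val < t
        · rw [if_pos h, if_neg (by omega)]
        · rw [if_neg h, if_pos (by omega)]
      have hz1 : z ∈ famDA1Channel t i f₁ f₂ x := by
        refine ⟨Finset.univ.filter (fun k : Fin (4 * t) => k.val < t), ?_, y, ?_, fun j => rfl⟩
        · calc (Finset.univ.filter (fun k : Fin (4 * t) => k.val < t)).card
              ≤ (Finset.range t).card := by
                apply Finset.card_le_card_of_injOn Fin.val
                · intro k hk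
                  rw [Finset.mem_coe, Finset.mem_filter] at hk
                  exact Finset.mem_range.mpr hk.2
                · intro k _ k' _ h; exact Fin.ext h
            _ = t := Finset.card_range t
        · intro j m hm
          rw [Finset.mem_filter] at hm
          push_neg at hm
          exact if_neg (by have := hm (Finset.mem_univ m); omega)
      have hz2 : z ∈ famDA1Channel t i f₁ f₂ x' := by
        refine ⟨Finset.univ.filter (fun k : Fin (4 * t) => t ≤ k.val ∧ k.val < 2 * t),
          ?_, y', ?_, ?_⟩
        · calc (Finset.univ.filter (fun k : Fin (4 * t) => t ≤ k.val ∧ k.val < 2 * t)).card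
              ≤ (Finset.range t).card := by
                apply Finset.card_le_card_of_injOn (fun k => k.val - t)
                · intro k hk
                  rw [Finset.mem_coe, Finset.mem_filter] at hk
                  exact Finset.mem_range.mpr (by beta_reduce; omega)
                · intro k hk k' hk' h
                  simp only [Finset.coe_filter, Set.mem_setOf_eq, Finset.mem_univ,
                    true_and] at hk hk'
                  simp only at h
                  exact Fin.ext (by omega)
            _ = t := Finset.card_range t
        · intro j m hm
          rw [Finset.mem_filter] at hm
          push_neg at hm
          exact if_neg (by intro hc; have := hm (Finset.mem_univ m) hc.1; omega)
        · intro j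
          show (f₁ j (firstPartD t (y j)), f₂ j (lastPartD t (y j))) = _
          rw [hfirst j, hlasty' j, hlasty j]
          have : f₂ j (lastPartD t (x j)) = f₂ j (lastPartD t (x' j)) := congrFun hg j
          rw [this]
      have hdisj := hU x hx x' hx' hne
      have : z ∈ famDA1Channel t i f₁ f₂ x ∩ famDA1Channel t i f₁ f₂ x' := ⟨hz1, hz2⟩
      rw [hdisj] at this
      exact this
    calc C.card ≤ (Finset.univ : Finset (Fin i → A)).card :=
          Finset.card_le_card_of_injOn _ (fun _ _ => Finset.mem_univ _) hinj
      _ = Fintype.card A ^ i := by rw [Finset.card_univ]; simp [Fintype.card_fun]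
end

section
/- Let Ω₁ : X₁ → Set Y₁ and Ω₂ : X₂ → Set Y₂ be channels with nonempty fan-out sets and Y₁ ⊆ X₂, and let Ω₁ ▶ Ω₂ : X₁ → Set Y₂ be their concatenation, (Ω₁ ▶ Ω₂)(x) = ⋃_{y ∈ Ω₁(x)} Ω₂(y). Then the maximum cardinality of an unambiguous code for Ω₁ ▶ Ω₂ is at most the minimum of the maximum cardinalities of unambiguous codes for Ω₁ and for Ω₂; equivalently, C₁(Ω₁ ▶ Ω₂) ≤ min{C₁(Ω₁), C₁(Ω₂)}. -/
/-- The maximum cardinality of an unambiguous code for the channel `Ω`. -/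
noncomputable def maxUnambCard {X Y : Type*} (Ω : X → Set Y) : ℕ :=
  sSup { n : ℕ | ∃ C : Finset X, Unambiguous Ω C ∧ C.card = n }

/-- The concatenation `Ω₁ ▶ Ω₂` of two channels. -/
def concatChannel {X₁ X₂ Y₂ : Type*} (Ω₁ : X₁ → Set X₂) (Ω₂ : X₂ → Set Y₂) :
    X₁ → Set Y₂ :=
  fun x => ⋃ y ∈ Ω₁ x, Ω₂ y

lemma card_le_maxUnambCard {X Y : Type*} [Fintype X] (Ω : X → Set Y)
    (C : Finset X) (h : Unambiguous Ω C) : C.card ≤ maxUnambCard Ω := by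
  apply le_csSup
  · refine ⟨Fintype.card X, ?_⟩
    rintro n ⟨D, -, rfl⟩
    exact D.card_le_univ.trans_eq (Finset.card_univ)
  · exact ⟨C, h, rfl⟩

/-- The maximum cardinality of an unambiguous code for a concatenation
`Ω₁ ▶ Ω₂` is at most the minimum of the maximum cardinalities of unambiguous
codes for `Ω₁` and for `Ω₂`; equivalently `C₁(Ω₁ ▶ Ω₂) ≤ min{C₁(Ω₁), C₁(Ω₂)}`. -/
theorem concat_channel_capacity {X₁ X₂ Y₂ : Type*} [Fintype X₁] [Fintype X₂]
    (Ω₁ : X₁ → Set X₂) (Ω₂ : X₂ → Set Y₂)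
    (hne₁ : ∀ x, (Ω₁ x).Nonempty) (hne₂ : ∀ x, (Ω₂ x).Nonempty) :
    maxUnambCard (concatChannel Ω₁ Ω₂) ≤
      min (maxUnambCard Ω₁) (maxUnambCard Ω₂) := by
  apply csSup_le'
  rintro n ⟨C, hC, rfl⟩
  classical
  -- key: elements of Ω₂ of elements of Ω₁ x lie in concat
  have hmem : ∀ x : X₁, ∀ y ∈ Ω₁ x, ∀ z ∈ Ω₂ y, z ∈ concatChannel Ω₁ Ω₂ x := by
    intro x y hy z hz
    exact Set.mem_biUnion hy hz
  refine le_min ?_ ?_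
  · -- C is unambiguous for Ω₁
    apply card_le_maxUnambCard
    intro x hx y hy hxy
    by_contra hne
    rw [← Set.not_nonempty_iff_eq_empty, not_not] at hne
    obtain ⟨z, hzx, hzy⟩ := hne
    obtain ⟨w, hw⟩ := hne₂ z
    have := hC x hx y hy hxy
    have : w ∈ concatChannel Ω₁ Ω₂ x ∩ concatChannel Ω₁ Ω₂ y :=
      ⟨hmem x z hzx w hw, hmem y z hzy w hw⟩
    rw [hC x hx y hy hxy] at this
    exact this
  · -- choose f x ∈ Ω₁ x; image is unambiguous for Ω₂ and f is injective on C
    set f : X₁ → X₂ := fun x => (hne₁ x).choose with hf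
    have hfmem : ∀ x, f x ∈ Ω₁ x := fun x => (hne₁ x).choose_spec
    have hinj : Set.InjOn f C := by
      intro x hx y hy hxy
      by_contra hne
      obtain ⟨w, hw⟩ := hne₂ (f x)
      have : w ∈ concatChannel Ω₁ Ω₂ x ∩ concatChannel Ω₁ Ω₂ y :=
        ⟨hmem x (f x) (hfmem x) w hw, hmem y (f y) (hfmem y) w (hxy ▸ hw)⟩
      rw [hC x hx y hy hne] at this
      exact this
    have hcard : (C.image f).card = C.card := Finset.card_image_of_injOn hinj
    rw [← hcard]
    apply card_le_maxUnambCard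
    intro a ha b hb hab
    simp only [Finset.mem_image] at ha hb
    obtain ⟨x, hx, rfl⟩ := ha
    obtain ⟨y, hy, rfl⟩ := hb
    have hxy : x ≠ y := fun h => hab (by rw [h])
    by_contra hne
    rw [← Set.not_nonempty_iff_eq_empty, not_not] at hne
    obtain ⟨w, hwx, hwy⟩ := hne
    have : w ∈ concatChannel Ω₁ Ω₂ x ∩ concatChannel Ω₁ Ω₂ y :=
      ⟨hmem x (f x) (hfmem x) w hwx, hmem y (f y) (hfmem y) w hwy⟩
    rw [hC x hx y hy hxy] at this
    exact this
end

section
/- (Channel-theoretic form of the Multishot Double Cut-Set Bound.) Let Ω : X → Set Z be a channel, and suppose there exist channels Ω₁ : X → Set Y₁, Ω' : Y₁ → Set Y₂ and Ω₂ : Y₂ → Set Z, all with nonempty fan-out sets, such that the concatenation is finer than Ω, i.e. (Ω₁ ▶ Ω' ▶ Ω₂)(x) ⊆ Ω(x) for all x ∈ X. Then every unambiguous code for Ω has cardinality at most the maximum cardinality of an unambiguous code for Ω'; equivalently, C₁(Ω) ≤ C₁(Ω'). -/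
/-- Channel-theoretic Multishot Double Cut-Set Bound: if `Ω₁ ▶ Ω' ▶ Ω₂` is
finer than `Ω` (all channels having nonempty fan-out sets), then every
unambiguous code for `Ω` has cardinality at most the maximum cardinality of an
unambiguous code for `Ω'`; equivalently `C₁(Ω) ≤ C₁(Ω')`. -/
theorem multishot_double_cut_set_bound {X Y₁ Y₂ Z : Type*}
    [Fintype X] [Fintype Y₁]
    (Ω : X → Set Z) (Ω₁ : X → Set Y₁) (Ω' : Y₁ → Set Y₂) (Ω₂ : Y₂ → Set Z)
    (hΩ : ∀ x, (Ω x).Nonempty) (h₁ : ∀ x, (Ω₁ x).Nonempty)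
    (h' : ∀ y, (Ω' y).Nonempty) (h₂ : ∀ y, (Ω₂ y).Nonempty)
    (h : ∀ x, concatChannel Ω₁ (concatChannel Ω' Ω₂) x ⊆ Ω x) :
    (∀ C : Finset X, Unambiguous Ω C → C.card ≤ maxUnambCard Ω') ∧
    maxUnambCard Ω ≤ maxUnambCard Ω' := by
  classical
  have hmain : ∀ C : Finset X, Unambiguous Ω C → C.card ≤ maxUnambCard Ω' := by
    intro C hC
    -- choose f x ∈ Ω₁ x
    choose f hf using h₁
    -- key: for distinct x y in C, Ω' (f x) ∩ Ω' (f y) = ∅ and f injective on C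
    have key : ∀ x ∈ C, ∀ y ∈ C, x ≠ y → Ω' (f x) ∩ Ω' (f y) = ∅ := by
      intro x hx y hy hxy
      by_contra hne
      obtain ⟨w, hw1, hw2⟩ := Set.nonempty_iff_ne_empty.2 hne
      obtain ⟨z, hz⟩ := h₂ w
      have hzx : z ∈ Ω x := h x ⟨_, ⟨f x, rfl⟩, ⟨_, ⟨hf x, rfl⟩,
        ⟨_, ⟨w, rfl⟩, ⟨_, ⟨hw1, rfl⟩, hz⟩⟩⟩⟩
      have hzy : z ∈ Ω y := h y ⟨_, ⟨f y, rfl⟩, ⟨_, ⟨hf y, rfl⟩,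
        ⟨_, ⟨w, rfl⟩, ⟨_, ⟨hw2, rfl⟩, hz⟩⟩⟩⟩
      have := hC x hx y hy hxy
      exact absurd (Set.mem_inter hzx hzy) (by simp [this])
    have hinj : Set.InjOn f C := by
      intro x hx y hy hxy
      by_contra hne
      obtain ⟨w, hw⟩ := h' (f x)
      have := key x hx y hy hne
      have : w ∈ Ω' (f x) ∩ Ω' (f y) := ⟨hw, hxy ▸ hw⟩
      simp_all
    have hcard : (C.image f).card = C.card := Finset.card_image_of_injOn hinj
    have hunamb : Unambiguous Ω' (C.image f) := by
      intro a ha b hb hab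
      obtain ⟨x, hx, rfl⟩ := Finset.mem_image.1 ha
      obtain ⟨y, hy, rfl⟩ := Finset.mem_image.1 hb
      exact key x hx y hy (fun e => hab (e ▸ rfl))
    have hbdd : BddAbove { n : ℕ | ∃ D : Finset Y₁, Unambiguous Ω' D ∧ D.card = n } := by
      refine ⟨Fintype.card Y₁, ?_⟩
      rintro n ⟨D, -, rfl⟩
      exact Finset.card_le_univ D
    calc C.card = (C.image f).card := hcard.symm
      _ ≤ maxUnambCard Ω' := le_csSup hbdd ⟨C.image f, hunamb, rfl⟩
  refine ⟨hmain, ?_⟩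
  refine csSup_le ⟨0, ∅, ?_, rfl⟩ ?_
  · intro x hx; simp at hx
  · rintro n ⟨C, hC, rfl⟩
    exact hmain C hC
end
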